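/- Let Γ be a totally ordered abelian group and D a domain graded by Γ_{≥0}, i.e. D = ⊕_{λ ≥ 0} D_λ. Then any homogeneous element x ∈ D of positive degree is not Egyptian (x ∉ R(D)). In particular, if D_0 is a field, then D is E-simple. -/

import Mathlib

noncomputable def recip (D : Type*) [CommRing D] [IsDomain D] : Subring (FractionRing D) :=
  Subring.closure {x | ∃ d : D, d ≠ 0 ∧ x = (algebraMap D (FractionRing D) d)⁻¹}

set_option linter.unusedSectionVars false

section Aux

noncomputable instance recipAuxDec {ι : Type*} {D : Type*} [AddCommGroup D]
    (𝒜 : ι → AddSubgroup D) : ∀ (i : ι) (x : 𝒜 i), Decidable (x ≠ 0) :=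
  fun _ _ => Classical.dec _

variable {Γ : Type*} [AddCommGroup Γ] [LinearOrder Γ] [IsOrderedAddMonoid Γ] [DecidableEq Γ]
  {D : Type*} [CommRing D] [IsDomain D]

/-- Every element of `recip D` is a finite sum of reciprocals. -/
lemma recip_rep {y : FractionRing D} (hy : y ∈ recip D) :
    ∃ (n : ℕ) (e : Fin n → D), (∀ j, e j ≠ 0) ∧
      y = ∑ j, (algebraMap D (FractionRing D) (e j))⁻¹ := by
  induction hy using Subring.closure_induction with
  | mem x hx =>
      obtain ⟨d, hd, rfl⟩ := hx
      exact ⟨1, fun _ => d, fun _ => hd, by simp⟩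
  | zero => exact ⟨0, Fin.elim0, fun j => j.elim0, by simp⟩
  | one => exact ⟨1, fun _ => 1, fun _ => one_ne_zero, by simp⟩
  | add x y hx hy ihx ihy =>
      obtain ⟨n, e, he, rfl⟩ := ihx
      obtain ⟨m, g, hg, rfl⟩ := ihy
      refine ⟨n + m, Fin.append e g, ?_, ?_⟩
      · intro j
        refine Fin.addCases (fun j => ?_) (fun j => ?_) j
        · rw [Fin.append_left]; exact he j
        · rw [Fin.append_right]; exact hg j
      · rw [Fin.sum_univ_add]
        simp [Fin.append_left, Fin.append_right]
  | neg x hx ihx =>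
      obtain ⟨n, e, he, rfl⟩ := ihx
      refine ⟨n, fun j => -e j, fun j => neg_ne_zero.mpr (he j), ?_⟩
      simp [inv_neg, Finset.sum_neg_distrib]
  | mul x y hx hy ihx ihy =>
      obtain ⟨n, e, he, rfl⟩ := ihx
      obtain ⟨m, g, hg, rfl⟩ := ihy
      refine ⟨n * m,
        fun i => e (finProdFinEquiv.symm i).1 * g (finProdFinEquiv.symm i).2,
        fun i => mul_ne_zero (he _) (hg _), ?_⟩
      rw [Fintype.sum_mul_sum,
        ← Equiv.sum_comp finProdFinEquiv
          (fun i : Fin (n * m) =>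
            (algebraMap D (FractionRing D)
              (e (finProdFinEquiv.symm i).1 * g (finProdFinEquiv.symm i).2))⁻¹)]
      simp [Fintype.sum_prod_type, map_mul, mul_inv, mul_comm]

variable (𝒜 : {γ : Γ // 0 ≤ γ} → AddSubgroup D) [GradedRing 𝒜]

local notation "ι" => {γ : Γ // 0 ≤ γ}



lemma support_nonempty {d : D} (hd : d ≠ 0) :
    (DirectSum.decompose 𝒜 d).support.Nonempty := by
  rw [Finset.nonempty_iff_ne_empty]
  intro h
  rw [DFinsupp.support_eq_empty] at h
  exact hd ((DirectSum.decompose 𝒜).injective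
    (h.trans (DirectSum.decompose_zero (ℳ := 𝒜)).symm))

/-- The top degree of a nonzero element (junk value `0` for `0`). -/
noncomputable def deg (d : D) : ι :=
  if h : (DirectSum.decompose 𝒜 d).support.Nonempty then
    (DirectSum.decompose 𝒜 d).support.max' h else 0

lemma deg_eq {d : D} (hd : d ≠ 0) :
    deg 𝒜 d = (DirectSum.decompose 𝒜 d).support.max' (support_nonempty 𝒜 hd) := by
  rw [deg, dif_pos (support_nonempty 𝒜 hd)]

lemma le_deg {d : D} (hd : d ≠ 0) {j : ι}
    (hj : j ∈ (DirectSum.decompose 𝒜 d).support) : j ≤ deg 𝒜 d := by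
  rw [deg_eq 𝒜 hd]; exact Finset.le_max' _ _ hj

lemma deg_mem {d : D} (hd : d ≠ 0) :
    deg 𝒜 d ∈ (DirectSum.decompose 𝒜 d).support := by
  rw [deg_eq 𝒜 hd]; exact Finset.max'_mem _ _

lemma apply_deg_ne_zero {d : D} (hd : d ≠ 0) :
    ((DirectSum.decompose 𝒜 d) (deg 𝒜 d) : D) ≠ 0 := by
  have := deg_mem 𝒜 hd
  rw [DFinsupp.mem_support_iff] at this
  simpa [ZeroMemClass.coe_eq_zero] using this

lemma apply_eq_zero_of_deg_lt {d : D} (hd : d ≠ 0) {n : ι} (hn : deg 𝒜 d < n) :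
    ((DirectSum.decompose 𝒜 d) n : D) = 0 := by
  by_contra h
  have hmem : n ∈ (DirectSum.decompose 𝒜 d).support := by
    rw [DFinsupp.mem_support_iff]
    exact fun h0 => h (by rw [h0]; rfl)
  exact absurd (le_deg 𝒜 hd hmem) (not_le.mpr hn)

lemma deg_le_of (d : D) (hd : d ≠ 0) (N : ι)
    (h : ∀ n : ι, N < n → ((DirectSum.decompose 𝒜 d) n : D) = 0) :
    deg 𝒜 d ≤ N := by
  by_contra hc
  exact apply_deg_ne_zero 𝒜 hd (h _ (not_le.mp hc))

lemma deg_mul {a b : D} (ha : a ≠ 0) (hb : b ≠ 0) :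
    deg 𝒜 (a * b) = deg 𝒜 a + deg 𝒜 b := by
  have hab : a * b ≠ 0 := mul_ne_zero ha hb
  have key : ∀ n : ι, ((DirectSum.decompose 𝒜 (a * b)) n : D) =
      ∑ ij ∈ (((DirectSum.decompose 𝒜 a).support ×ˢ
          (DirectSum.decompose 𝒜 b).support).filter
            (fun ij : ι × ι => ij.1 + ij.2 = n)),
        ((DirectSum.decompose 𝒜 a) ij.1 * (DirectSum.decompose 𝒜 b) ij.2 : D) := by
    intro n
    rw [DirectSum.decompose_mul]
    exact DirectSum.coe_mul_apply 𝒜 _ _ n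
  -- the component at `deg a + deg b` is the product of the two top components
  have htop : ((DirectSum.decompose 𝒜 (a * b)) (deg 𝒜 a + deg 𝒜 b) : D) =
      ((DirectSum.decompose 𝒜 a) (deg 𝒜 a) : D) *
        ((DirectSum.decompose 𝒜 b) (deg 𝒜 b) : D) := by
    rw [key]
    have : (((DirectSum.decompose 𝒜 a).support ×ˢ
        (DirectSum.decompose 𝒜 b).support).filter
          (fun ij : ι × ι => ij.1 + ij.2 = deg 𝒜 a + deg 𝒜 b)) =
        {(deg 𝒜 a, deg 𝒜 b)} := by
      ext ⟨i, j⟩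
      simp only [Finset.mem_filter, Finset.mem_product, Finset.mem_singleton, Prod.mk.injEq]
      constructor
      · rintro ⟨⟨hi, hj⟩, hij⟩
        have h1 : i ≤ deg 𝒜 a := le_deg 𝒜 ha hi
        have h2 : j ≤ deg 𝒜 b := le_deg 𝒜 hb hj
        have : i = deg 𝒜 a := by
          by_contra hne
          have : i + j < deg 𝒜 a + deg 𝒜 b :=
            add_lt_add_of_lt_of_le (lt_of_le_of_ne h1 hne) h2
          exact absurd hij (ne_of_lt this)
        refine ⟨this, ?_⟩
        subst this
        exact add_left_cancel hij
      · rintro ⟨rfl, rfl⟩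
        exact ⟨⟨deg_mem 𝒜 ha, deg_mem 𝒜 hb⟩, rfl⟩
    rw [this, Finset.sum_singleton]
  have hne : ((DirectSum.decompose 𝒜 (a * b)) (deg 𝒜 a + deg 𝒜 b) : D) ≠ 0 := by
    rw [htop]
    exact mul_ne_zero (apply_deg_ne_zero 𝒜 ha) (apply_deg_ne_zero 𝒜 hb)
  have hle : deg 𝒜 (a * b) ≤ deg 𝒜 a + deg 𝒜 b := by
    refine deg_le_of 𝒜 _ hab _ (fun n hn => ?_)
    rw [key]
    refine Finset.sum_eq_zero (fun ij hij => ?_)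
    simp only [Finset.mem_filter, Finset.mem_product] at hij
    obtain ⟨⟨hi, hj⟩, hijn⟩ := hij
    exfalso
    have : ij.1 + ij.2 ≤ deg 𝒜 a + deg 𝒜 b :=
      add_le_add (le_deg 𝒜 ha hi) (le_deg 𝒜 hb hj)
    rw [hijn] at this
    exact absurd hn (not_lt.mpr this)
  refine le_antisymm hle (le_deg 𝒜 hab ?_)
  rw [DFinsupp.mem_support_iff]
  exact fun h0 => hne (by rw [h0]; rfl)

lemma deg_nonneg_all (i : ι) : (0 : ι) ≤ i :=
  Subtype.coe_le_coe.mp (by simpa using i.2)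

/-- Key lemma: a nonzero Egyptian element has top degree `≤ 0`. -/
lemma deg_le_zero_of_mem_recip {d : D} (hd : d ≠ 0)
    (h : algebraMap D (FractionRing D) d ∈ recip D) : deg 𝒜 d ≤ 0 := by
  obtain ⟨n, e, he, heq⟩ := recip_rep h
  set f := algebraMap D (FractionRing D) with hf
  have hfinj : Function.Injective f := IsFractionRing.injective D (FractionRing D)
  have hfne : ∀ j, f (e j) ≠ 0 := fun j h0 => he j (hfinj (by simpa using h0))
  set b : D := ∏ j, e j with hb
  have hbne : b ≠ 0 := Finset.prod_ne_zero_iff.mpr (fun j _ => he j)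
  set c : Fin n → D := fun j => ∏ k ∈ Finset.univ.erase j, e k with hc
  have hcne : ∀ j, c j ≠ 0 := fun j =>
    Finset.prod_ne_zero_iff.mpr (fun k _ => he k)
  have hcb : ∀ j, c j * e j = b := by
    intro j
    rw [hc, hb, mul_comm]
    exact Finset.mul_prod_erase Finset.univ e (Finset.mem_univ j)
  have hmain : d * b = ∑ j, c j := by
    apply hfinj
    rw [map_mul, map_sum, heq, Finset.sum_mul]
    refine Finset.sum_congr rfl (fun j _ => ?_)
    have : f b = f (e j) * f (c j) := by
      rw [← map_mul, mul_comm (e j), hcb]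
    rw [this, inv_mul_cancel_left₀ (hfne j)]
  -- each `c j` has degree at most `deg b`
  have hcdeg : ∀ j, deg 𝒜 (c j) ≤ deg 𝒜 b := by
    intro j
    have : deg 𝒜 b = deg 𝒜 (c j) + deg 𝒜 (e j) := by
      rw [← hcb j, deg_mul 𝒜 (hcne j) (he j)]
    rw [this]
    exact le_add_of_nonneg_right (deg_nonneg_all _)
  have hdb : deg 𝒜 (d * b) ≤ deg 𝒜 b := by
    refine deg_le_of 𝒜 _ (mul_ne_zero hd hbne) _ (fun m hm => ?_)
    rw [hmain, DirectSum.decompose_sum, DFinsupp.finset_sum_apply,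
      AddSubmonoidClass.coe_finset_sum]
    refine Finset.sum_eq_zero (fun j _ => ?_)
    exact apply_eq_zero_of_deg_lt 𝒜 (hcne j) (lt_of_le_of_lt (hcdeg j) hm)
  rw [deg_mul 𝒜 hd hbne] at hdb
  exact le_of_add_le_add_right (le_trans hdb (by simp))

lemma deg_of_mem {x : D} {i : ι} (hx : x ∈ 𝒜 i) (hx0 : x ≠ 0) :
    deg 𝒜 x = i := by
  rw [deg_eq 𝒜 hx0]
  have hsupp : (DirectSum.decompose 𝒜 x).support = {i} := by
    rw [DirectSum.decompose_of_mem 𝒜 hx]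
    exact DirectSum.support_of (β := fun i => 𝒜 i) i ⟨x, hx⟩
      (fun h => hx0 (by simpa using congrArg Subtype.val h))
  simp [hsupp]

end Aux

/-- Let `D` be a domain graded by the nonnegative part of a totally
ordered abelian group `Γ`.  Then every nonzero homogeneous element of positive degree is
not Egyptian.  In particular, if `D₀` is a field, then `D` is E-simple (every nonzero
Egyptian element is a unit). -/
theorem stmt_7 (Γ : Type*) [AddCommGroup Γ] [LinearOrder Γ] [IsOrderedAddMonoid Γ] [DecidableEq Γ]
    (D : Type*) [CommRing D] [IsDomain D]
    (𝒜 : {γ : Γ // 0 ≤ γ} → AddSubgroup D) [GradedRing 𝒜] :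
    (∀ (i : {γ : Γ // 0 ≤ γ}) (x : D), 0 < (i : Γ) → x ∈ 𝒜 i → x ≠ 0 →
      algebraMap D (FractionRing D) x ∉ recip D) ∧
    ((∀ x ∈ 𝒜 0, x ≠ 0 → IsUnit x) →
      ∀ d : D, d ≠ 0 → algebraMap D (FractionRing D) d ∈ recip D → IsUnit d) := by
  constructor
  · intro i x hipos hx hx0 hmem
    have h1 : deg 𝒜 x ≤ 0 := deg_le_zero_of_mem_recip 𝒜 hx0 hmem
    rw [deg_of_mem 𝒜 hx hx0] at h1
    have : (i : Γ) ≤ 0 := by simpa using Subtype.coe_le_coe.mpr h1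
    exact absurd hipos (not_lt.mpr this)
  · intro hfield d hd hmem
    have h1 : deg 𝒜 d ≤ 0 := deg_le_zero_of_mem_recip 𝒜 hd hmem
    have h2 : deg 𝒜 d = 0 := le_antisymm h1 (deg_nonneg_all _)
    have hsupp : (DirectSum.decompose 𝒜 d).support ⊆ {0} := by
      intro j hj
      rw [Finset.mem_singleton]
      exact le_antisymm (h2 ▸ le_deg 𝒜 hd hj) (deg_nonneg_all _)
    have hsupp' : (DirectSum.decompose 𝒜 d).support = {0} := by
      refine Finset.Subset.antisymm hsupp ?_
      intro j hj
      rw [Finset.mem_singleton] at hj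
      subst hj
      rw [← h2]
      exact deg_mem 𝒜 hd
    have hd0 : d ∈ 𝒜 0 := by
      have := DirectSum.sum_support_decompose 𝒜 d
      rw [hsupp', Finset.sum_singleton] at this
      rw [← this]
      exact SetLike.coe_mem _
    exact hfield d hd0 hd
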